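/- For all integers s ≥ 1 and m ≥ 2 with t = 2m − 1, the domination number of H(t,s) equals m: every dominating set of H(t,s) has at least m vertices, and every m-element subset of V(T) is a dominating set of H(t,s). -/

import Mathlib

/-- The vertex set of the graph `H(t,s)` (with `m`-subsets of the `t`-clique used as
attachment sets): the `t` vertices of the complete graph `T` together with, for each
`m`-subset `X` of `V(T)`, the `s` vertices of `K_X` not identified with `X`. -/
def HVert (t m s : ℕ) : Type :=
  Fin t ⊕ ({X : Finset (Fin t) // X.card = m} × Fin s)

/-- The graph `H(t,s)`: a complete graph `T` on `t` vertices, and for each `m`-subset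
`X` of `V(T)` a complete graph `K_X` on `s + m` vertices, with `m` of the vertices of
`K_X` identified with `X`. -/
def HGraph (t m s : ℕ) : SimpleGraph (HVert t m s) :=
  SimpleGraph.fromRel (fun a b =>
    match a, b with
    | Sum.inl _, Sum.inl _ => True
    | Sum.inl x, Sum.inr q => x ∈ q.1.1
    | Sum.inr _, Sum.inl _ => False
    | Sum.inr q, Sum.inr r => q.1 = r.1)

/-- `A` is a dominating set of `G`: every vertex is in `A` or adjacent to a vertex
of `A`. -/
def IsDominatingSet {W : Type*} (G : SimpleGraph W) (A : Set W) : Prop :=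
  ∀ v, v ∈ A ∨ ∃ a ∈ A, G.Adj a v

instance (t m s : ℕ) : DecidableEq (HVert t m s) := by
  unfold HVert; infer_instance

/-- for `s ≥ 1`, `m ≥ 2` and `t = 2m - 1`, the domination number of
`H(t,s)` is `m`: every dominating set has at least `m` vertices, and every
`m`-subset of `V(T)` is a dominating set. -/
theorem HGraph_domination_number (m s : ℕ) (hm : 2 ≤ m) (hs : 1 ≤ s) :
    (∀ A : Finset (HVert (2 * m - 1) m s),
        IsDominatingSet (HGraph (2 * m - 1) m s) ↑A → m ≤ A.card) ∧
      ∀ X : Finset (Fin (2 * m - 1)), X.card = m →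
        IsDominatingSet (HGraph (2 * m - 1) m s)
          {v | ∃ x ∈ X, v = Sum.inl x} := by
  constructor
  · intro A hA
    by_contra hlt
    push_neg at hlt
    -- the T-vertices of A
    set S : Finset (Fin (2*m-1)) := A.filterMap Sum.getLeft? (by
      intro a a' b h h'
      cases a <;> cases a' <;> simp_all) with hS
    have hmemS : ∀ x, x ∈ S ↔ Sum.inl x ∈ A := by
      intro x
      rw [hS]; refine (Finset.mem_filterMap _).trans ?_
      constructor
      · rintro ⟨a, ha, h⟩; cases a <;> simp_all <;> exact ha
      · intro h; exact ⟨_, h, by simp⟩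
    letI : DecidablePred (fun v : HVert (2*m-1) m s => v.isLeft = true) := fun v => instDecidableEqBool _ _
    set L : Finset (HVert (2*m-1) m s) := A.filter (fun v => v.isLeft = true) with hL
    set R : Finset (HVert (2*m-1) m s) := A.filter (fun v => ¬ v.isLeft = true) with hR
    have hLR : L.card + R.card = A.card :=
      Finset.card_filter_add_card_filter_not _
    have hLS : L.card = S.card := by
      refine (Finset.card_bij (fun x _ => Sum.inl x) ?_ ?_ ?_).symm
      · intro x hx
        exact Finset.mem_filter.mpr ⟨(hmemS x).mp hx, rfl⟩
      · intro a _ b _ h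
        exact Sum.inl.inj h
      · intro v hv
        cases v with
        | inl x => exact ⟨x, (hmemS x).mpr (Finset.mem_filter.mp hv).1, rfl⟩
        | inr q => exact absurd (Finset.mem_filter.mp hv).2 Bool.false_ne_true
    set g : HVert (2*m-1) m s → Finset (Fin (2*m-1)) := fun v =>
      match v with
      | Sum.inl _ => ∅
      | Sum.inr q => q.1.1 with hg
    set B : Finset (Finset (Fin (2*m-1))) := R.image g with hB
    set F : Finset (Finset (Fin (2*m-1))) := Sᶜ.powersetCard m with hF
    have hFB : F ⊆ B := by
      intro X hX
      rw [hF, Finset.mem_powersetCard] at hX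
      obtain ⟨hXs, hXc⟩ := hX
      rcases hA (Sum.inr ⟨⟨X, hXc⟩, ⟨0, hs⟩⟩) with hv | ⟨a, haA, hadj⟩
      · exact Finset.mem_image.mpr ⟨Sum.inr ⟨⟨X, hXc⟩, ⟨0, hs⟩⟩,
          Finset.mem_filter.mpr ⟨Finset.mem_coe.mp hv, by exact Bool.false_ne_true⟩, rfl⟩
      · simp only [HGraph, SimpleGraph.fromRel_adj] at hadj
        obtain ⟨hne, hrel⟩ := hadj
        cases a with
        | inl x =>
          have hx : x ∈ X := by
            rcases hrel with h | h
            · exact h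
            · exact absurd h (by simp)
          have hxS : x ∈ S := (hmemS x).mpr (Finset.mem_coe.mp haA)
          have := hXs hx
          simp [Finset.mem_compl] at this
          exact absurd hxS this
        | inr q =>
          have hq : q.1 = (⟨X, hXc⟩ : {Y : Finset (Fin (2*m-1)) // Y.card = m}) := by
            rcases hrel with h | h
            · exact h
            · exact h.symm
          refine Finset.mem_image.mpr ⟨Sum.inr q, Finset.mem_filter.mpr ⟨Finset.mem_coe.mp haA, by exact Bool.false_ne_true⟩, ?_⟩
          simp [hg, hq]
    have hBR : B.card ≤ R.card := Finset.card_image_le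
    have hFcard : F.card = (2*m-1 - S.card).choose m := by
      rw [hF, Finset.card_powersetCard, Finset.card_compl, Fintype.card_fin]
    have hSA : S.card ≤ A.card := by
      rw [← hLS]; omega
    have hSm : S.card < m := lt_of_le_of_lt hSA hlt
    have hmn : m ≤ 2*m-1 - S.card := by omega
    have hchoose : m - S.card ≤ (2*m-1 - S.card).choose m := by
      set n := 2*m-1 - S.card with hn
      have h1 : n.choose m = n.choose (n - m) := (Nat.choose_symm hmn).symm
      have h2 : (n - m + 1).choose (n - m) ≤ n.choose (n - m) :=
        Nat.choose_le_choose _ (by omega)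
      have h3 : (n - m + 1).choose (n - m) = n - m + 1 :=
        Nat.choose_succ_self_right _
      have h4 : m - S.card = n - m + 1 := by omega
      omega
    have hFB' : F.card ≤ B.card := Finset.card_le_card hFB
    omega
  · intro X hX v
    rcases v with y | ⟨Y, i⟩
    · by_cases hy : y ∈ X
      · exact Or.inl ⟨y, hy, rfl⟩
      · right
        obtain ⟨x, hx⟩ : X.Nonempty := Finset.card_pos.mp (by omega)
        refine ⟨Sum.inl x, ⟨x, hx, rfl⟩, ?_⟩
        simp only [HGraph, SimpleGraph.fromRel_adj]
        exact ⟨fun h => hy (Sum.inl.inj h ▸ hx), Or.inl trivial⟩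
    · right
      have hcap : (X ∩ Y.1).Nonempty := by
        rw [← Finset.card_pos]
        have h1 := Finset.card_union_add_card_inter X Y.1
        have h2 : (X ∪ Y.1).card ≤ 2 * m - 1 := by
          have := Finset.card_le_univ (X ∪ Y.1)
          simpa [Fintype.card_fin] using this
        have := Y.2
        omega
      obtain ⟨x, hx⟩ := hcap
      rw [Finset.mem_inter] at hx
      refine ⟨Sum.inl x, ⟨x, hx.1, rfl⟩, ?_⟩
      simp only [HGraph, SimpleGraph.fromRel_adj]
      exact ⟨fun h => Sum.inl_ne_inr h, Or.inl hx.2⟩
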